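/- On the k-ary tree, any nonnegative function ψ with ψ(∅) = 0, harmonic at every vertex ≠ ∅, and satisfying ψ(z) ≤ k^m − 1 on the set F_m of vertices whose longest common prefix with a fixed infinite ray y∞ has length exactly m, must be constant on each F_m: ψ(x) = ψ(y_m) for every x ∈ F_m, where y_m is the depth-m vertex on the ray. -/

import Mathlib

/-- Length of the longest common prefix of two lists. -/
def commonLen {α : Type*} [DecidableEq α] : List α → List α → ℕ
  | a :: as, b :: bs => if a = b then commonLen as bs + 1 else 0
  | _, _ => 0

/-- `ψ` is harmonic at the nonempty vertex `x` for the `k`-ary tree random walk. -/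
def treeHarmAt (k : ℕ) (ψ : List (Fin k) → ℝ) (x : List (Fin k)) : Prop :=
  ψ x = (1 / 2) * ψ x.dropLast + ∑ j : Fin k, (1 / (2 * (k : ℝ))) * ψ (x ++ [j])

/-- Length of the longest common prefix of a finite sequence `x` with the infinite ray
`y∞`. -/
def rayLen {k : ℕ} (yinf : ℕ → Fin k) (x : List (Fin k)) : ℕ :=
  commonLen x (List.ofFn fun i : Fin x.length => yinf i)

lemma commonLen_self {α} [DecidableEq α] (l : List α) : commonLen l l = l.length := by
  induction l with
  | nil => rfl
  | cons a l ih => simp [commonLen, ih]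

lemma rayLen_eq {k} (yinf : ℕ → Fin k) (x : List (Fin k)) (n : ℕ) (h : x.length = n) :
    rayLen yinf x = commonLen x (List.ofFn fun i : Fin n => yinf i) := by
  subst h; rfl

lemma rayLen_ray {k} (yinf : ℕ → Fin k) (m : ℕ) :
    rayLen yinf (List.ofFn fun i : Fin m => yinf i) = m := by
  rw [rayLen_eq yinf _ m List.length_ofFn, commonLen_self, List.length_ofFn]

lemma commonLen_branch {k} : ∀ (m : ℕ) (z : ℕ → Fin k) (a : Fin k) (w : List (Fin k))
    (n : ℕ), m < n → a ≠ z m →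
    commonLen ((List.ofFn fun i : Fin m => z i) ++ a :: w)
      (List.ofFn fun i : Fin n => z i) = m := by
  intro m
  induction m with
  | zero =>
    intro z a w n hn ha
    obtain ⟨n', rfl⟩ : ∃ n', n = n' + 1 := ⟨n - 1, by omega⟩
    simp [commonLen, List.ofFn_succ, ha]
  | succ m ih =>
    intro z a w n hn ha
    obtain ⟨n', rfl⟩ : ∃ n', n = n' + 1 := ⟨n - 1, by omega⟩
    simp only [List.ofFn_succ, List.cons_append, commonLen, if_pos rfl, Fin.val_succ]
    rw [ih (fun i => z (i + 1)) a w n' (by omega) (by simpa using ha)]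
    simp

lemma rayLen_decomp {k} : ∀ (m : ℕ) (z : ℕ → Fin k) (x : List (Fin k)), rayLen z x = m →
    x = (List.ofFn fun i : Fin m => z i) ∨
    ∃ a w, a ≠ z m ∧ x = (List.ofFn fun i : Fin m => z i) ++ a :: w := by
  intro m
  induction m with
  | zero =>
    intro z x h
    cases x with
    | nil => left; simp
    | cons b x' =>
      right
      refine ⟨b, x', ?_, by simp⟩
      intro hb
      simp [rayLen, List.ofFn_succ, commonLen, hb] at h
  | succ m ih =>
    intro z x h
    cases x with
    | nil => simp [rayLen, commonLen] at h
    | cons b x' =>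
      have hray : rayLen z (b::x') =
          if b = z 0 then rayLen (fun j => z (j+1)) x' + 1 else 0 := by
        simp only [rayLen, List.length_cons, List.ofFn_succ, commonLen, Fin.val_succ,
          Fin.val_zero]
      rw [hray] at h
      by_cases hb : b = z 0
      · rw [if_pos hb] at h
        have h' := ih (fun j => z (j+1)) x' (by omega)
        rcases h' with h' | ⟨a, w, ha, h'⟩
        · left
          rw [List.ofFn_succ]
          simp only [Fin.val_succ, Fin.val_zero]
          rw [← hb, ← h']
        · right
          refine ⟨a, w, by simpa using ha, ?_⟩
          rw [List.ofFn_succ]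
          simp only [Fin.val_succ, Fin.val_zero]
          rw [← hb, h', List.cons_append]
      · rw [if_neg hb] at h; omega

lemma convex_bounded_nonpos (t : ℕ → ℝ) (h0 : t 0 = 0)
    (hconv : ∀ n, 2 * t (n+1) ≤ t n + t (n+2))
    (B : ℝ) (hB : ∀ n, t n ≤ B) : ∀ n, t n ≤ 0 := by
  set d : ℕ → ℝ := fun n => t (n+1) - t n with hd
  have hmono : Monotone d := by
    apply monotone_nat_of_le_succ
    intro n
    have := hconv n
    simp only [hd]
    linarith
  have hgrow : ∀ n j, t n + j * d n ≤ t (n + j) := by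
    intro n j
    induction j with
    | zero => simp
    | succ j ihj =>
      have h1 : d n ≤ d (n + j) := hmono (by omega)
      have h2 : t (n + j) + d (n + j) = t (n + j + 1) := by simp [hd]
      push_cast
      have : (n + (j+1)) = (n + j) + 1 := by omega
      rw [this]
      nlinarith
  have hdnp : ∀ n, d n ≤ 0 := by
    intro n
    by_contra hpos
    push_neg at hpos
    obtain ⟨j, hj⟩ := exists_nat_gt ((B - t n) / d n)
    have hj' : (B - t n) < j * d n := by
      rw [div_lt_iff₀ hpos] at hj; linarith
    have := hgrow n j
    have := hB (n + j)
    linarith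
  intro n
  induction n with
  | zero => simp [h0]
  | succ n ihn =>
    have := hdnp n
    simp only [hd] at this
    linarith

lemma half_sum (k : ℕ) (hk : 2 ≤ k) (c : ℝ) :
    ∑ _j : Fin k, (1/(2*(k:ℝ))) * c = c / 2 := by
  have hk0 : (0:ℝ) < (k:ℝ) := by
    have : 0 < k := by omega
    exact_mod_cast this
  rw [Finset.sum_const, Finset.card_univ, Fintype.card_fin, nsmul_eq_mul]
  field_simp

lemma subtree_nonpos (k : ℕ) (hk : 2 ≤ k) (B : ℝ) (h : List (Fin k) → ℝ)
    (hb : ∀ w, h w ≤ B)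
    (hh0 : h [] = ∑ j : Fin k, (1/(2*(k:ℝ))) * h [j])
    (hh : ∀ w : List (Fin k), w ≠ [] →
      h w = (1/2) * h w.dropLast + ∑ j : Fin k, (1/(2*(k:ℝ))) * h (w ++ [j])) :
    ∀ w, h w ≤ 0 := by
  have hk0 : (0:ℝ) < (k:ℝ) := by
    have : 0 < k := by omega
    exact_mod_cast this
  haveI inst : ∀ n, Nonempty {w : List (Fin k) // w.length = n} :=
    fun n => ⟨⟨List.replicate n ⟨0, by omega⟩, by simp⟩⟩
  set S : ℕ → ℝ := fun n => ⨆ w : {w : List (Fin k) // w.length = n}, h w.val with hS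
  have hbdd : ∀ n, BddAbove (Set.range
      (fun w : {w : List (Fin k) // w.length = n} => h w.val)) :=
    fun n => ⟨B, by rintro _ ⟨w, rfl⟩; exact hb _⟩
  have hle : ∀ (w : List (Fin k)), h w ≤ S w.length := by
    intro w
    exact le_ciSup (hbdd w.length) ⟨w, rfl⟩
  have hSB : ∀ n, S n ≤ B := fun n => ciSup_le (fun w => hb _)
  set t : ℕ → ℝ := fun n => match n with | 0 => 0 | (n+1) => S n with ht
  have hsumle : ∀ (n : ℕ) (w : List (Fin k)), w.length + 1 = n →
      ∑ j : Fin k, (1/(2*(k:ℝ))) * h (w ++ [j]) ≤ S n / 2 := by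
    intro n w hn
    calc ∑ j : Fin k, (1/(2*(k:ℝ))) * h (w ++ [j])
        ≤ ∑ _j : Fin k, (1/(2*(k:ℝ))) * S n := by
          apply Finset.sum_le_sum; intro j _
          have hj := hle (w ++ [j])
          rw [List.length_append, List.length_singleton, hn] at hj
          have hpos : 0 ≤ 1/(2*(k:ℝ)) := by positivity
          exact mul_le_mul_of_nonneg_left hj hpos
      _ = S n / 2 := half_sum k hk _
  have hconv : ∀ n, 2 * t (n+1) ≤ t n + t (n+2) := by
    intro n
    match n with
    | 0 =>
      show 2 * S 0 ≤ 0 + S 1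
      have hS0 : S 0 ≤ S 1 / 2 := by
        apply ciSup_le
        rintro ⟨w, hw⟩
        have hwn : w = [] := List.eq_nil_of_length_eq_zero hw
        subst hwn
        rw [hh0]
        exact hsumle 1 [] rfl
      linarith
    | (n+1) =>
      show 2 * S (n+1) ≤ S n + S (n+2)
      have hS1 : S (n+1) ≤ (S n + S (n+2)) / 2 := by
        apply ciSup_le
        rintro ⟨w, hw⟩
        have hwne : w ≠ [] := by intro hnil; subst hnil; simp at hw
        rw [hh w hwne]
        have h1 : h w.dropLast ≤ S n := by
          have h1' := hle w.dropLast
          rwa [List.length_dropLast, hw] at h1'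
        have h2 := hsumle (n+2) w (by omega)
        linarith
      linarith
  have hkey := convex_bounded_nonpos t rfl hconv (max B 0)
    (fun n => match n with
      | 0 => le_max_right _ _
      | (n+1) => le_trans (hSB n) (le_max_left _ _))
  intro w
  calc h w ≤ S w.length := hle w
    _ = t (w.length + 1) := rfl
    _ ≤ 0 := hkey (w.length + 1)

lemma sum_sub_half (k : ℕ) (hk : 2 ≤ k) (f : Fin k → ℝ) (c : ℝ) :
    ∑ j : Fin k, (1/(2*(k:ℝ))) * (f j - c)
      = (∑ j : Fin k, (1/(2*(k:ℝ))) * f j) - c / 2 := by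
  rw [← half_sum k hk c, ← Finset.sum_sub_distrib]
  exact Finset.sum_congr rfl (fun j _ => by ring)

lemma sub_sum_half (k : ℕ) (hk : 2 ≤ k) (f : Fin k → ℝ) (c : ℝ) :
    ∑ j : Fin k, (1/(2*(k:ℝ))) * (c - f j)
      = c / 2 - ∑ j : Fin k, (1/(2*(k:ℝ))) * f j := by
  rw [← half_sum k hk c, ← Finset.sum_sub_distrib]
  exact Finset.sum_congr rfl (fun j _ => by ring)

/-- A bounded function on a rooted full `k`-ary subtree, harmonic at every vertex of the
subtree with external parent value `c`, is everywhere equal to `c`. -/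
lemma subtree_const (k : ℕ) (hk : 2 ≤ k) (B : ℝ) (g : List (Fin k) → ℝ) (c : ℝ)
    (hb : ∀ w, g w - c ≤ B) (hb' : ∀ w, c - g w ≤ B)
    (hg : ∀ w : List (Fin k), g w = (1/2) * (if w = [] then c else g w.dropLast)
        + ∑ j : Fin k, (1/(2*(k:ℝ))) * g (w ++ [j])) :
    ∀ w, g w = c := by
  have h1 : ∀ w, g w - c ≤ 0 := by
    apply subtree_nonpos k hk B (fun w => g w - c) hb
    · show g [] - c = ∑ j : Fin k, (1/(2*(k:ℝ))) * (g [j] - c)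
      rw [sum_sub_half k hk (fun j => g [j]) c]
      have h0 := hg []
      rw [if_pos rfl] at h0
      simp only [List.nil_append] at h0
      linarith
    · intro w hw
      show g w - c = (1/2) * (g w.dropLast - c)
          + ∑ j : Fin k, (1/(2*(k:ℝ))) * (g (w ++ [j]) - c)
      rw [sum_sub_half k hk (fun j => g (w ++ [j])) c]
      have h0 := hg w
      rw [if_neg hw] at h0
      linarith
  have h2 : ∀ w, c - g w ≤ 0 := by
    apply subtree_nonpos k hk B (fun w => c - g w) hb'
    · show c - g [] = ∑ j : Fin k, (1/(2*(k:ℝ))) * (c - g [j])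
      rw [sub_sum_half k hk (fun j => g [j]) c]
      have h0 := hg []
      rw [if_pos rfl] at h0
      simp only [List.nil_append] at h0
      linarith
    · intro w hw
      show c - g w = (1/2) * (c - g w.dropLast)
          + ∑ j : Fin k, (1/(2*(k:ℝ))) * (c - g (w ++ [j]))
      rw [sub_sum_half k hk (fun j => g (w ++ [j])) c]
      have h0 := hg w
      rw [if_neg hw] at h0
      linarith
  intro w
  have := h1 w
  have := h2 w
  linarith

/-- On the `k`-ary tree, any nonnegative `ψ` with `ψ(∅) = 0`, harmonic at every nonempty
vertex, and satisfying `ψ(z) ≤ k^m − 1` on the set `F_m` of vertices whose longest common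
prefix with a fixed infinite ray `y∞` has length exactly `m`, is constant on each `F_m`:
`ψ(x) = ψ(y_m)` for every `x ∈ F_m`, `y_m` being the depth-`m` vertex on the ray. -/
theorem tree_harmonic_constant_on_ray_classes
    (k : ℕ) (hk : 2 ≤ k) (yinf : ℕ → Fin k)
    (ψ : List (Fin k) → ℝ) (hnonneg : ∀ x, 0 ≤ ψ x) (hroot : ψ [] = 0)
    (hharm : ∀ x : List (Fin k), x ≠ [] → treeHarmAt k ψ x)
    (hbound : ∀ m : ℕ, ∀ x : List (Fin k), rayLen yinf x = m → ψ x ≤ (k : ℝ) ^ m - 1) :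
    ∀ m : ℕ, ∀ x : List (Fin k), rayLen yinf x = m →
      ψ x = ψ (List.ofFn fun i : Fin m => yinf i) := by
  intro m x hx
  set ym : List (Fin k) := List.ofFn fun i : Fin m => yinf i with hym
  rcases rayLen_decomp m yinf x hx with rfl | ⟨a, w, ha, rfl⟩
  · rfl
  · set c : ℝ := ψ ym with hc
    have hcb : c ≤ (k:ℝ)^m - 1 := hbound m ym (rayLen_ray yinf m)
    have hc0 : 0 ≤ c := hnonneg ym
    have hF : ∀ w' : List (Fin k), rayLen yinf (ym ++ a :: w') = m := by
      intro w'
      have hlen : (ym ++ a :: w').length = m + (w'.length + 1) := by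
        simp [hym]
      rw [rayLen_eq yinf _ _ hlen]
      exact commonLen_branch m yinf a w' _ (by omega) ha
    have hg := subtree_const k hk ((k:ℝ)^m - 1) (fun w' => ψ (ym ++ a :: w')) c
      (fun w' => by
        have := hbound m (ym ++ a :: w') (hF w')
        linarith)
      (fun w' => by
        have := hnonneg (ym ++ a :: w')
        linarith)
      (fun w' => by
        show ψ (ym ++ a :: w') = (1/2) * (if w' = [] then c else ψ (ym ++ a :: w'.dropLast))
            + ∑ j : Fin k, (1/(2*(k:ℝ))) * ψ (ym ++ a :: (w' ++ [j]))
        have hrm := hharm (ym ++ a :: w') (by simp)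
        unfold treeHarmAt at hrm
        have hsum_eq : ∑ j : Fin k, (1/(2*(k:ℝ))) * ψ ((ym ++ a :: w') ++ [j])
            = ∑ j : Fin k, (1/(2*(k:ℝ))) * ψ (ym ++ a :: (w' ++ [j])) := by
          apply Finset.sum_congr rfl; intro j _; congr 2; simp
        rw [hrm, hsum_eq]
        congr 2
        by_cases hwn : w' = []
        · subst hwn
          rw [if_pos rfl, hc]
          simp
        · rw [if_neg hwn]
          rw [show ym ++ a :: w' = (ym ++ [a]) ++ w' from by simp,
            List.dropLast_append_of_ne_nil hwn]
          simp)
    have := hg w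
    simpa using this
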